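/- For every real α and every n ∈ ℕ, the polynomial identity x² · L_n^{(α+4)}(x) = d(x) · L_n^{(α+2)}(x) − e(x) · L_n^{(α+1)}(x) holds in ℝ[x], where d(x) = (x + α + 3)(x + α + 2) − x(α + n + 3) and e(x) = (x + α + 3)(α + n + 2). -/

import Mathlib

open Polynomial

/-- The generalized Laguerre polynomial `L_n^{(α)}(x) =
∑_{k=0}^{n} (−1)^k [∏_{j=k+1}^{n}(α+j)] / ((n−k)!·k!) · x^k`. -/
noncomputable def laguerre (α : ℝ) (n : ℕ) : Polynomial ℝ :=
  ∑ k ∈ Finset.range (n + 1),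
    Polynomial.C ((-1 : ℝ) ^ k * (∏ j ∈ Finset.Icc (k + 1) n, (α + (j : ℝ))) /
      ((n - k).factorial * k.factorial)) * Polynomial.X ^ k

/-- Bottom split of a product over `Icc`. -/
lemma prodBot (f : ℕ → ℝ) {m n : ℕ} (h : m ≤ n) :
    ∏ j ∈ Finset.Icc m n, f j = f m * ∏ j ∈ Finset.Icc (m + 1) n, f j := by
  rw [← Finset.Ico_add_one_right_eq_Icc, ← Finset.Ico_add_one_right_eq_Icc,
    Finset.prod_eq_prod_Ico_succ_bot (by omega) f]

lemma prodA (β : ℝ) (n m : ℕ) (h : m ≤ n + 1) :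
    ∏ j ∈ Finset.Icc m n, (β + 2 + (j : ℝ)) =
      ∏ j ∈ Finset.Icc m n, (β + 1 + (j : ℝ)) +
        ((n : ℝ) + 1 - m) * ∏ j ∈ Finset.Icc (m + 1) n, (β + 1 + (j : ℝ)) := by
  induction n with
  | zero =>
    interval_cases m
    · simp
      ring
    · rw [Finset.Icc_eq_empty (show ¬ (1:ℕ) ≤ 0 by omega),
        Finset.Icc_eq_empty (show ¬ (1+1:ℕ) ≤ 0 by omega)]
      simp
  | succ n ih =>
    rcases Nat.lt_or_ge m (n + 2) with hm | hm
    · rcases Nat.eq_or_lt_of_le (Nat.lt_succ_iff.mp hm) with hm' | hm'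
      · subst hm'
        rw [Finset.Icc_self, Finset.Icc_eq_empty (show ¬ n+1+1 ≤ n+1 by omega)]
        push_cast
        simp
        ring
      · -- m ≤ n
        have hmn : m ≤ n := by omega
        rw [Finset.prod_Icc_succ_top (show m ≤ n + 1 by omega),
          Finset.prod_Icc_succ_top (show m ≤ n + 1 by omega),
          Finset.prod_Icc_succ_top (show m + 1 ≤ n + 1 by omega), ih (by omega),
          prodBot (fun j => (β + 1 + (j:ℝ))) hmn]
        push_cast
        ring
    · have : m = n + 2 := by omega
      subst this
      rw [Finset.Icc_eq_empty (show ¬ n+2 ≤ n+1 by omega),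
        Finset.Icc_eq_empty (show ¬ n+2+1 ≤ n+1 by omega)]
      push_cast
      simp
      ring

lemma prodB (β : ℝ) (n m : ℕ) (h : m ≤ n + 1) :
    (β + (n : ℝ) + 1) * ∏ j ∈ Finset.Icc m n, (β + (j : ℝ)) =
      (β + (m : ℝ)) * ∏ j ∈ Finset.Icc m n, (β + 1 + (j : ℝ)) := by
  induction n with
  | zero =>
    interval_cases m
    · simp
      ring
    · rw [Finset.Icc_eq_empty (show ¬ (1:ℕ) ≤ 0 by omega)]
      simp
  | succ n ih =>
    rcases Nat.lt_or_ge m (n + 2) with hm | hm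
    · rw [Finset.prod_Icc_succ_top (show m ≤ n + 1 by omega),
        Finset.prod_Icc_succ_top (show m ≤ n + 1 by omega)]
      have hih := ih (by omega)
      push_cast at hih ⊢
      linear_combination (β + (n:ℝ) + 2) * hih
    · have : m = n + 2 := by omega
      subst this
      rw [Finset.Icc_eq_empty (show ¬ n+2 ≤ n+1 by omega)]
      push_cast
      simp
      ring

lemma laguerre_coeff (α : ℝ) (n k : ℕ) :
    (laguerre α n).coeff k =
      if k ≤ n then
        (-1 : ℝ) ^ k * (∏ j ∈ Finset.Icc (k + 1) n, (α + (j : ℝ))) /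
          ((n - k).factorial * k.factorial)
      else 0 := by
  unfold laguerre
  rw [Polynomial.finset_sum_coeff]
  simp only [Polynomial.coeff_C_mul, Polynomial.coeff_X_pow, mul_ite, mul_one, mul_zero,
    Finset.sum_ite_eq, Finset.mem_range, Nat.lt_succ_iff]

lemma laguerre_step (β : ℝ) (n : ℕ) :
    Polynomial.X * laguerre (β + 2) n =
      (Polynomial.X + Polynomial.C (β + 1)) * laguerre (β + 1) n -
        Polynomial.C (β + (n : ℝ) + 1) * laguerre β n := by
  rw [add_mul]
  ext k
  cases k with
  | zero =>
    simp only [Polynomial.coeff_sub, Polynomial.coeff_add, Polynomial.coeff_C_mul,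
      Polynomial.mul_coeff_zero, Polynomial.coeff_X_zero, zero_mul, laguerre_coeff,
      Nat.zero_le, if_true, Nat.sub_zero, Nat.factorial_zero, pow_zero, one_mul,
      Nat.cast_one, mul_one, zero_add, Polynomial.coeff_C_zero]
    have hB := prodB β n 1 (by omega)
    push_cast at hB
    have hf : ((n.factorial : ℝ)) ≠ 0 := Nat.cast_ne_zero.mpr n.factorial_ne_zero
    field_simp
    linear_combination hB
  | succ k =>
    simp only [Polynomial.coeff_sub, Polynomial.coeff_add, Polynomial.coeff_C_mul,
      Polynomial.coeff_X_mul, laguerre_coeff]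
    split_ifs with h1 h2 h2
    · -- k ≤ n and k + 1 ≤ n, i.e. k < n
      obtain ⟨m, rfl⟩ : ∃ m, n = k + m + 1 := ⟨n - k - 1, by omega⟩
      rw [show k + m + 1 - k = m + 1 from by omega, show k + m + 1 - (k + 1) = m from by omega]
      have hA := prodA β (k + m + 1) (k + 1) (by omega)
      have hB := prodB β (k + m + 1) (k + 1 + 1) (by omega)
      rw [hA, Nat.factorial_succ (m), Nat.factorial_succ (k)]
      push_cast at hB ⊢
      have hm1 : ((m.factorial : ℝ)) ≠ 0 := Nat.cast_ne_zero.mpr m.factorial_ne_zero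
      have hk1 : ((k.factorial : ℝ)) ≠ 0 := Nat.cast_ne_zero.mpr k.factorial_ne_zero
      have hm2 : ((m : ℝ) + 1) ≠ 0 := by positivity
      have hk2 : ((k : ℝ) + 1) ≠ 0 := by positivity
      field_simp
      linear_combination (-(-1:ℝ)^k * ((m:ℝ)+1)) * hB
    · -- k ≤ n, ¬ k + 1 ≤ n : k = n
      have : k = n := by omega
      subst this
      rw [Finset.Icc_eq_empty (show ¬ k+1 ≤ k by omega)]
      simp
    · omega
    · simp

theorem laguerre_mixed_recurrence_equal_deg_param_four_step (α : ℝ) (n : ℕ) :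
    Polynomial.X ^ 2 * laguerre (α + 4) n =
      ((Polynomial.X + Polynomial.C (α + 3)) * (Polynomial.X + Polynomial.C (α + 2)) -
          Polynomial.X * Polynomial.C (α + (n : ℝ) + 3)) * laguerre (α + 2) n -
        (Polynomial.X + Polynomial.C (α + 3)) * Polynomial.C (α + (n : ℝ) + 2) *
          laguerre (α + 1) n := by
  have h1 := laguerre_step (α + 2) n
  have h2 := laguerre_step (α + 1) n
  rw [show α + 2 + 2 = α + 4 from by ring, show α + 2 + 1 = α + 3 from by ring,
    show α + 2 + (n : ℝ) + 1 = α + (n : ℝ) + 3 from by ring] at h1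
  rw [show α + 1 + 2 = α + 3 from by ring, show α + 1 + 1 = α + 2 from by ring,
    show α + 1 + (n : ℝ) + 1 = α + (n : ℝ) + 2 from by ring] at h2
  linear_combination Polynomial.X * h1 + (Polynomial.X + Polynomial.C (α + 3)) * h2
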